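/- Let w : [τ₀, ∞) → ℝ be locally Lipschitz and nonnegative, satisfying w'(τ) ≥ a(τ) w(τ) − c e^{−δτ} for a.e. τ, where a(τ) ≥ c₁ > 0 is measurable and bounded, and suppose w is bounded. Then lim_{τ→∞} w(τ) = 0 and moreover w(τ) ≤ (c/δ) e^{−δτ} for all τ ≥ τ₀. -/

import Mathlib

open MeasureTheory

/-- A locally Lipschitz real function admits a (real) Lipschitz bound on any
compact interval. -/
lemma locallyLipschitz_abs_bound_Icc {f : ℝ → ℝ} (hf : LocallyLipschitz f) (s t : ℝ) :
    ∃ K : ℝ, 0 ≤ K ∧ ∀ x ∈ Set.Icc s t, ∀ y ∈ Set.Icc s t, |f x - f y| ≤ K * |x - y| := by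
  rcases le_or_gt s t with hst | hst
  swap
  · exact ⟨0, le_rfl, fun x hx => absurd hx (by rw [Set.Icc_eq_empty (not_le.2 hst)]; simp)⟩
  set A : Set ℝ := {u | s ≤ u ∧ u ≤ t ∧ ∃ K : ℝ, 0 ≤ K ∧
      ∀ x ∈ Set.Icc s u, ∀ y ∈ Set.Icc s u, |f x - f y| ≤ K * |x - y|} with hA
  have hsA : s ∈ A := by
    refine ⟨le_rfl, hst, 0, le_rfl, fun x hx y hy => ?_⟩
    have hx' : x = s := le_antisymm hx.2 hx.1
    have hy' : y = s := le_antisymm hy.2 hy.1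
    simp [hx', hy']
  have hbdd : BddAbove A := ⟨t, fun x hx => hx.2.1⟩
  set u := sSup A with hu
  have hsu : s ≤ u := le_csSup hbdd hsA
  have hut : u ≤ t := csSup_le ⟨s, hsA⟩ fun x hx => hx.2.1
  obtain ⟨K₀, V, hV, hlipV⟩ := hf u
  obtain ⟨r, hr, hball⟩ := Metric.mem_nhds_iff.1 hV
  set ε := r / 2 with hε
  have hε0 : 0 < ε := by positivity
  obtain ⟨x, hxA, hx⟩ := exists_lt_of_lt_csSup ⟨s, hsA⟩ (show u - ε < u by linarith)
  have hxu : x ≤ u := le_csSup hbdd hxA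
  obtain ⟨hsx, hxt, Kx, hKx0, hKx⟩ := hxA
  have hmem : ∀ z : ℝ, u - ε < z → z ≤ u + ε → z ∈ V := by
    intro z h1 h2
    apply hball
    rw [Metric.mem_ball, Real.dist_eq, abs_sub_lt_iff]
    constructor <;> linarith
  set y := min t (u + ε) with hy
  have hyA : y ∈ A := by
    refine ⟨le_min hst (by linarith), min_le_left _ _, Kx + ↑K₀, by positivity, ?_⟩
    have key : ∀ p ∈ Set.Icc s y, ∀ q ∈ Set.Icc s y, p ≤ q →
        |f p - f q| ≤ (Kx + ↑K₀) * |p - q| := by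
      intro p hp q hq hpq
      have hqy : q ≤ u + ε := hq.2.trans (min_le_right _ _)
      have hpy : p ≤ u + ε := hpq.trans hqy
      rcases le_or_gt q x with hqx | hqx
      · have h1 := hKx p ⟨hp.1, hpq.trans hqx⟩ q ⟨hq.1, hqx⟩
        have habs : (0:ℝ) ≤ |p - q| := abs_nonneg _
        nlinarith [NNReal.coe_nonneg K₀]
      · rcases le_or_gt p x with hpx | hpx
        · have h1 : |f p - f x| ≤ Kx * |p - x| := hKx p ⟨hp.1, hpx⟩ x ⟨hsx, le_rfl⟩
          have h2 : dist (f x) (f q) ≤ ↑K₀ * dist x q :=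
            (lipschitzOnWith_iff_dist_le_mul.1 hlipV) x (hmem x hx (by linarith))
              q (hmem q (by linarith) hqy)
          rw [Real.dist_eq, Real.dist_eq] at h2
          have h3 : |p - x| ≤ |p - q| := by
            rw [abs_of_nonpos (by linarith), abs_of_nonpos (by linarith)]; linarith
          have h4 : |x - q| ≤ |p - q| := by
            rw [abs_of_nonpos (by linarith), abs_of_nonpos (by linarith)]; linarith
          calc |f p - f q| ≤ |f p - f x| + |f x - f q| := abs_sub_le _ _ _
            _ ≤ Kx * |p - q| + ↑K₀ * |p - q| := by
                refine add_le_add (h1.trans ?_) (h2.trans ?_)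
                · exact mul_le_mul_of_nonneg_left h3 hKx0
                · exact mul_le_mul_of_nonneg_left h4 (NNReal.coe_nonneg K₀)
            _ = (Kx + ↑K₀) * |p - q| := by ring
        · have h2 : dist (f p) (f q) ≤ ↑K₀ * dist p q :=
            (lipschitzOnWith_iff_dist_le_mul.1 hlipV) p (hmem p (by linarith) hpy)
              q (hmem q (by linarith) hqy)
          rw [Real.dist_eq, Real.dist_eq] at h2
          have habs : (0:ℝ) ≤ |p - q| := abs_nonneg _
          nlinarith
    intro p hp q hq
    rcases le_total p q with h | h
    · exact key p hp q hq h
    · rw [abs_sub_comm (f p), abs_sub_comm p]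
      exact key q hq p hp h
  have hyu : y ≤ u := le_csSup hbdd hyA
  have hty : y = t := by
    rcases le_total t (u + ε) with h | h
    · exact min_eq_left h
    · exfalso
      have h' : y = u + ε := min_eq_right h
      rw [h'] at hyu; linarith
  rw [hty] at hyA
  exact ⟨hyA.2.2.choose, hyA.2.2.choose_spec.1, hyA.2.2.choose_spec.2⟩

/-- A locally Lipschitz function with a.e. nonnegative derivative on `(s,t)`
satisfies `f s ≤ f t`. -/
lemma le_of_ae_deriv_nonneg {f : ℝ → ℝ} (hf : LocallyLipschitz f) {s t : ℝ} (hst : s ≤ t)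
    (h : ∀ᵐ x ∂(volume.restrict (Set.Ioo s t)), ∃ f', HasDerivAt f f' x ∧ 0 ≤ f') :
    f s ≤ f t := by
  obtain ⟨K, hK0, hK⟩ := locallyLipschitz_abs_bound_Icc hf s t
  set proj : ℝ → ℝ := fun x => max s (min x t) with hproj_def
  have hprojmem : ∀ x, proj x ∈ Set.Icc s t :=
    fun x => ⟨le_max_left _ _, max_le hst (min_le_right _ _)⟩
  have hprojlip : ∀ a b : ℝ, |proj a - proj b| ≤ |a - b| := by
    intro a b
    calc |proj a - proj b| ≤ max |s - s| |min a t - min b t| :=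
          abs_max_sub_max_le_max s (min a t) s (min b t)
      _ = |min a t - min b t| := by
          rw [sub_self, abs_zero]; exact max_eq_right (abs_nonneg _)
      _ ≤ max |a - b| |t - t| := abs_min_sub_min_le_max a t b t
      _ = |a - b| := by
          rw [sub_self, abs_zero]; exact max_eq_left (abs_nonneg _)
  set F : ℝ → ℝ := fun x => f (proj x) + K * x with hF
  have hFmono : Monotone F := by
    intro p q hpq
    have h1 : |f (proj p) - f (proj q)| ≤ K * |p - q| :=
      (hK _ (hprojmem p) _ (hprojmem q)).trans (mul_le_mul_of_nonneg_left (hprojlip p q) hK0)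
    have h2 : f (proj p) - f (proj q) ≤ K * (q - p) := by
      have h3 := (le_abs_self (f (proj p) - f (proj q))).trans h1
      rwa [abs_sub_comm, abs_of_nonneg (sub_nonneg.2 hpq)] at h3
    simp only [hF]
    linarith
  have hFcont : Continuous F := by
    apply Continuous.add
    · exact hf.continuous.comp (continuous_const.max (continuous_id.min continuous_const))
    · exact continuous_const.mul continuous_id
  have hstj : ∀ z, hFmono.stieltjesFunction z = F z := by
    intro z
    rw [Monotone.stieltjesFunction_eq]
    exact hFmono.continuousWithinAt_Ioi_iff_rightLim_eq.1 hFcont.continuousAt.continuousWithinAt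
  have hae2 : ∀ᵐ z ∂(volume.restrict (Set.Ioo s t)),
      ENNReal.ofReal K ≤ hFmono.stieltjesFunction.measure.rnDeriv volume z := by
    filter_upwards [ae_restrict_of_ae hFmono.ae_hasDerivAt, h,
      ae_restrict_mem measurableSet_Ioo] with z hz1 hz2 hz3
    obtain ⟨f', hf', hf'0⟩ := hz2
    have heq : F =ᶠ[nhds z] (fun y => f y + K * y) := by
      filter_upwards [isOpen_Ioo.mem_nhds hz3] with y hy
      have hpy : proj y = y := by
        simp only [hproj_def]
        rw [min_eq_left hy.2.le, max_eq_right hy.1.le]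
      simp only [hF, hpy]
    have hFd : HasDerivAt F (f' + K) z := by
      have hKd : HasDerivAt (fun y : ℝ => K * y) K z := by
        simpa using (hasDerivAt_id z).const_mul K
      exact (hf'.add hKd).congr_of_eventuallyEq heq
    have huniq : (hFmono.stieltjesFunction.measure.rnDeriv volume z).toReal = f' + K :=
      hz1.unique hFd
    rcases eq_or_ne (hFmono.stieltjesFunction.measure.rnDeriv volume z) ⊤ with htop | htop
    · simp [htop]
    · rw [← ENNReal.ofReal_toReal htop, huniq]
      exact ENNReal.ofReal_le_ofReal (by linarith)
  have hKle : ENNReal.ofReal (K * (t - s)) ≤ ENNReal.ofReal (F t - F s) := by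
    calc ENNReal.ofReal (K * (t - s))
        = ENNReal.ofReal K * volume (Set.Ioo s t) := by
          rw [Real.volume_Ioo, ENNReal.ofReal_mul hK0]
      _ = ∫⁻ z in Set.Ioo s t, ENNReal.ofReal K ∂volume := (setLIntegral_const _ _).symm
      _ ≤ ∫⁻ z in Set.Ioo s t, hFmono.stieltjesFunction.measure.rnDeriv volume z ∂volume :=
          lintegral_mono_ae hae2
      _ ≤ hFmono.stieltjesFunction.measure (Set.Ioo s t) := Measure.setLIntegral_rnDeriv_le _
      _ ≤ hFmono.stieltjesFunction.measure (Set.Ioc s t) := measure_mono Set.Ioo_subset_Ioc_self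
      _ = ENNReal.ofReal (F t - F s) := by
          rw [StieltjesFunction.measure_Ioc, hstj, hstj]
  have hfinal : K * (t - s) ≤ F t - F s :=
    (ENNReal.ofReal_le_ofReal_iff (sub_nonneg.2 (hFmono hst))).1 hKle
  have hpt : proj t = t := by
    simp only [hproj_def]
    rw [min_self, max_eq_right hst]
  have hps : proj s = s := by
    simp only [hproj_def]
    rw [min_eq_left hst, max_self]
  simp only [hF, hpt, hps] at hfinal
  linarith

/-- Quantitative version: a.e. derivative lower bound gives a linear lower bound. -/
lemma le_of_ae_deriv_ge {f : ℝ → ℝ} (hf : LocallyLipschitz f) {s t m : ℝ} (hst : s ≤ t)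
    (h : ∀ᵐ x ∂(volume.restrict (Set.Ioo s t)), ∃ f', HasDerivAt f f' x ∧ m ≤ f') :
    f s + m * (t - s) ≤ f t := by
  have hmlip : LocallyLipschitz (fun x : ℝ => m * x) :=
    (contDiff_const.mul contDiff_id : ContDiff ℝ 1 _).locallyLipschitz
  have hmain := le_of_ae_deriv_nonneg (hf.sub hmlip) hst ?_
  · have hmain' : f s - m * s ≤ f t - m * t := hmain
    linarith
  · filter_upwards [h] with x hx
    obtain ⟨f', hf', hm⟩ := hx
    refine ⟨f' - m, hf'.sub ?_, by linarith⟩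
    simpa using (hasDerivAt_id x).const_mul m

/-- ODE comparison: a bounded nonnegative locally Lipschitz `w`
with `w' ≥ a·w − c e^{−δτ}` a.e., `a ≥ c₁ > 0` bounded measurable, satisfies
`w(τ) → 0` and `w(τ) ≤ (c/δ) e^{−δτ}` for all `τ ≥ τ₀`. -/
theorem ode_decay_comparison (τ₀ c δ c₁ M : ℝ)
    (hc : 0 < c) (hδ : 0 < δ) (hc₁ : 0 < c₁)
    (w a d : ℝ → ℝ)
    (hwlip : LocallyLipschitz w)
    (hwnonneg : ∀ τ, τ₀ ≤ τ → 0 ≤ w τ)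
    (hwbdd : ∀ τ, τ₀ ≤ τ → w τ ≤ M)
    (hameas : Measurable a)
    (halow : ∀ τ, c₁ ≤ a τ) (haupp : ∃ C, ∀ τ, a τ ≤ C)
    (hae : ∀ᵐ τ ∂(volume.restrict (Set.Ici τ₀)),
      HasDerivAt w (d τ) τ ∧ a τ * w τ - c * Real.exp (-(δ * τ)) ≤ d τ) :
    Filter.Tendsto w Filter.atTop (nhds 0)
    ∧ ∀ τ, τ₀ ≤ τ → w τ ≤ c / δ * Real.exp (-(δ * τ)) := by
  set E : ℝ → ℝ := fun τ => c / δ * Real.exp (-(δ * τ)) with hE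
  have hEpos : ∀ τ, 0 < E τ := fun τ => mul_pos (div_pos hc hδ) (Real.exp_pos _)
  have hEderiv : ∀ τ, HasDerivAt E (-(c * Real.exp (-(δ * τ)))) τ := by
    intro τ
    have h1 : HasDerivAt (fun τ : ℝ => -(δ * τ)) (-δ) τ := by
      exact HasDerivAt.neg (by simpa using (hasDerivAt_id τ).const_mul δ)
    have h2 := (Real.hasDerivAt_exp (-(δ * τ))).comp τ h1
    have h3 : HasDerivAt (fun y => c / δ * (Real.exp ∘ fun τ => -(δ * τ)) y)
        (c / δ * (Real.exp (-(δ * τ)) * -δ)) τ := h2.const_mul (c / δ)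
    convert h3 using 1
    · rfl
    field_simp
  have hElip : LocallyLipschitz E := by
    have hcd : ContDiff ℝ 1 E := by
      apply ContDiff.mul contDiff_const
      exact Real.contDiff_exp.comp (contDiff_const.mul contDiff_id).neg
    exact hcd.locallyLipschitz
  set g : ℝ → ℝ := fun τ => w τ - E τ with hg
  have hglip : LocallyLipschitz g := hwlip.sub hElip
  have hgae : ∀ s t : ℝ, τ₀ ≤ s →
      ∀ᵐ x ∂(volume.restrict (Set.Ioo s t)),
        ∃ g', HasDerivAt g g' x ∧ a x * w x ≤ g' := by
    intro s t hs
    have hsub : Set.Ioo s t ⊆ Set.Ici τ₀ := fun x hx => hs.trans hx.1.le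
    filter_upwards [ae_restrict_of_ae_restrict_of_subset hsub hae] with x hx
    obtain ⟨hw, hd⟩ := hx
    exact ⟨d x - -(c * Real.exp (-(δ * x))), hw.sub (hEderiv x), by linarith⟩
  have hmono : ∀ s t : ℝ, τ₀ ≤ s → s ≤ t → g s ≤ g t := by
    intro s t hs hst
    apply le_of_ae_deriv_nonneg hglip hst
    filter_upwards [hgae s t hs, ae_restrict_mem measurableSet_Ioo] with x hx hxm
    obtain ⟨g', hg', hge⟩ := hx
    exact ⟨g', hg',
      le_trans (mul_nonneg (hc₁.le.trans (halow x)) (hwnonneg x (hs.trans hxm.1.le))) hge⟩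
  have hle : ∀ τ, τ₀ ≤ τ → w τ ≤ E τ := by
    by_contra hcon
    push_neg at hcon
    obtain ⟨T, hT0, hT⟩ := hcon
    have hε : 0 < g T := by
      simp only [hg]
      linarith
    set ε := g T with hεdef
    have hwlower : ∀ x, T ≤ x → ε ≤ w x := by
      intro x hx
      have h1 : g T ≤ g x := hmono T x hT0 hx
      have h2 : g x ≤ w x := by
        have := hEpos x
        simp only [hg]
        linarith
      rw [hεdef]
      linarith
    set t := T + (M + 1 - ε) / (c₁ * ε) with ht
    have hMε : ε ≤ M := le_trans (hwlower T le_rfl) (hwbdd T hT0)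
    have hTt : T ≤ t := by
      have hnn : 0 ≤ (M + 1 - ε) / (c₁ * ε) := div_nonneg (by linarith) (by positivity)
      rw [ht]; linarith
    have hq : g T + (c₁ * ε) * (t - T) ≤ g t := by
      apply le_of_ae_deriv_ge hglip hTt
      filter_upwards [hgae T t hT0, ae_restrict_mem measurableSet_Ioo] with x hx hxm
      obtain ⟨g', hg', hge⟩ := hx
      refine ⟨g', hg', le_trans ?_ hge⟩
      exact mul_le_mul (halow x) (hwlower x hxm.1.le) hε.le (hc₁.le.trans (halow x))
    have hgt : g t ≤ M := by
      have h1 := hwbdd t (hT0.trans hTt)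
      have h2 := hEpos t
      simp only [hg]
      linarith
    have heq : (c₁ * ε) * (t - T) = M + 1 - ε := by
      have h1 : t - T = (M + 1 - ε) / (c₁ * ε) := by rw [ht]; ring
      rw [h1, mul_comm, div_mul_cancel₀]
      positivity
    rw [heq] at hq
    rw [← hεdef] at hq
    linarith
  refine ⟨?_, fun τ hτ => hle τ hτ⟩
  have hEtend : Filter.Tendsto E Filter.atTop (nhds 0) := by
    have h1 : Filter.Tendsto (fun τ : ℝ => -(δ * τ)) Filter.atTop Filter.atBot :=
      Filter.tendsto_neg_atTop_atBot.comp
        (Filter.Tendsto.const_mul_atTop hδ Filter.tendsto_id)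
    have h2 := Real.tendsto_exp_atBot.comp h1
    have h3 := h2.const_mul (c / δ)
    simpa [hE, Function.comp] using h3
  apply tendsto_of_tendsto_of_tendsto_of_le_of_le' tendsto_const_nhds hEtend
  · filter_upwards [Filter.eventually_ge_atTop τ₀] with τ hτ using hwnonneg τ hτ
  · filter_upwards [Filter.eventually_ge_atTop τ₀] with τ hτ using hle τ hτ
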